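/- Assume the hypotheses of the symmetrization theorem. Then for all β > 0 there exists α = α(β) > 0 such that limsup_n P( sup over 0 ≤ i, j ≤ 2|T_n|−2 with |i−j| ≤ ⌊α·|T_n|⌋ of a_n·dist(θ_{T_n}(i), θ_{T_n}(j)) > β ) < β. -/

import Mathlib

open MeasureTheory Filter Topology
open scoped ENNReal NNReal Classical

noncomputable section

namespace TreeSym

/-- Ulam–Harris words over the positive integers. -/
abbrev Vertex : Type := List ℕ+

instance : MeasurableSpace Vertex := ⊤
instance : MeasurableSpace (Finset Vertex) := ⊤

/-- A finite set of Ulam–Harris words is (the vertex set of) a rooted plane tree if it contains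
the empty word, is prefix-closed, and is closed under decreasing the last letter. -/
def IsPlaneTreeSet (t : Finset Vertex) : Prop :=
  ([] : Vertex) ∈ t ∧
  (∀ v ∈ t, ∀ u : Vertex, u <+: v → u ∈ t) ∧
  (∀ v : Vertex, ∀ i j : ℕ+, v ++ [i] ∈ t → j ≤ i → v ++ [j] ∈ t)

/-- The number of children of `v` in the vertex set `t`. -/
def nChild (t : Finset Vertex) (v : Vertex) : ℕ :=
  (t.filter fun w => ∃ i : ℕ+, w = v ++ [i]).card

/-- Length of the longest common prefix of two words. -/
def lcpLen : Vertex → Vertex → ℕ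
  | a :: u, b :: v => if a = b then lcpLen u v + 1 else 0
  | _, _ => 0

/-- The graph distance between two vertices of a plane tree. -/
def treeDist (u v : Vertex) : ℕ := u.length + v.length - 2 * lcpLen u v

/-- History of the contour exploration of the plane tree with vertex set `t`
(most recently visited vertex first). -/
def contourHist (t : Finset Vertex) : ℕ → List Vertex
  | 0 => [([] : Vertex)]
  | n + 1 =>
    let h := contourHist t n
    let cur := h.headI
    if (∃ m : ℕ, cur ++ [m.succPNat] ∈ t ∧ cur ++ [m.succPNat] ∉ h) then
      (cur ++ [(sInf {m : ℕ | cur ++ [m.succPNat] ∈ t ∧ cur ++ [m.succPNat] ∉ h}).succPNat]) :: h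
    else
      cur.dropLast :: h

/-- The contour exploration `θ_t`. -/
def theta (t : Finset Vertex) (i : ℕ) : Vertex := (contourHist t i).headI

/-- Piecewise linear interpolation: `interpFun n f (i/n) = f i` for `0 ≤ i ≤ n`, linear in
between. -/
def interpFun (n : ℕ) (f : ℕ → ℝ) (s : ℝ) : ℝ :=
  f 0 + ∑ k ∈ Finset.range n, (f (k + 1) - f k) * max 0 (min 1 (s * n - k))

lemma continuous_interpFun (n : ℕ) (f : ℕ → ℝ) : Continuous (interpFun n f) := by
  unfold interpFun
  refine continuous_const.add (continuous_finset_sum _ fun k _ => continuous_const.mul ?_)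
  exact continuous_const.max (continuous_const.min
    ((continuous_id.mul continuous_const).sub continuous_const))

/-- Piecewise linear interpolation, as a continuous map on `[0,1]`. -/
def interpMap (n : ℕ) (f : ℕ → ℝ) : C(unitInterval, ℝ) :=
  ⟨fun s => interpFun n f s, (continuous_interpFun n f).comp continuous_subtype_val⟩

/-- A multitype labeled plane tree with type space `S`: a finite set of Ulam–Harris words,
together with a type and a displacement (the label increment along the edge to the parent)
attached to each word. -/
structure MTree (S : Type*) where
  verts : Finset Vertex
  type : Vertex → S
  disp : Vertex → ℝ

/-- The underlying vertex set is a plane tree. -/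
def MTree.IsPlaneTree {S : Type*} (T : MTree S) : Prop := IsPlaneTreeSet T.verts

instance {S : Type*} [MeasurableSpace S] : MeasurableSpace (MTree S) :=
  MeasurableSpace.comap (fun T => (T.verts, T.type, T.disp)) inferInstance

/-- The label of a vertex: the sum of the displacements along the path from the root. -/
def labelOf {S : Type*} (T : MTree S) (v : Vertex) : ℝ :=
  ∑ j ∈ Finset.range v.length, T.disp (v.take (j + 1))

/-- The contour process, as a function on `ℝ`. -/
def contourFun {S : Type*} (T : MTree S) (s : ℝ) : ℝ :=
  interpFun (2 * T.verts.card - 2) (fun i => ((theta T.verts i).length : ℝ)) s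

/-- The label process, as a function on `ℝ`. -/
def labelFun {S : Type*} (T : MTree S) (s : ℝ) : ℝ :=
  interpFun (2 * T.verts.card - 2) (fun i => labelOf T (theta T.verts i)) s

/-- The contour process `C` of a tree, as a continuous map on `[0,1]`. -/
def contourProcess {S : Type*} (T : MTree S) : C(unitInterval, ℝ) :=
  interpMap (2 * T.verts.card - 2) fun i => ((theta T.verts i).length : ℝ)

/-- The label process `Z` of a labeled tree, as a continuous map on `[0,1]`. -/
def labelProcess {S : Type*} (T : MTree S) : C(unitInterval, ℝ) :=
  interpMap (2 * T.verts.card - 2) fun i => labelOf T (theta T.verts i)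

/-- The process `Λ^{(q)}` counting visited vertices of type `q` along the contour. -/
def lambdaProcess {S : Type*} (q : S) (T : MTree S) : C(unitInterval, ℝ) :=
  interpMap (2 * T.verts.card - 2) fun i =>
    (((Finset.range i).filter fun j => T.type (theta T.verts j) = q).card : ℝ)

/-! ### Symmetrization -/

/-- A vector of permutations, one for each potential vertex. -/
abbrev PermVec : Type := Vertex → Equiv.Perm ℕ+

/-- Relabel a word according to a permutation vector, the permutation used at each level being
the one attached to the (original) prefix. -/
def permWordAux (σ : PermVec) : Vertex → Vertex → Vertex
  | _, [] => []
  | p, i :: rest => σ p i :: permWordAux σ (p ++ [i]) rest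

def permWord (σ : PermVec) (v : Vertex) : Vertex := permWordAux σ [] v

/-- The inverse relabeling. -/
def invWordAux (σ : PermVec) : Vertex → Vertex → Vertex
  | _, [] => []
  | p, j :: rest => (σ p)⁻¹ j :: invWordAux σ (p ++ [(σ p)⁻¹ j]) rest

def invWord (σ : PermVec) (w : Vertex) : Vertex := invWordAux σ [] w

/-- Apply a permutation vector to a labeled multitype tree: children are reordered at every
vertex, types and displacements following their vertices and edges. -/
def permApply {S : Type*} (σ : PermVec) (T : MTree S) : MTree S :=
  ⟨T.verts.image (permWord σ), fun w => T.type (invWord σ w), fun w => T.disp (invWord σ w)⟩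

/-- The set `P_t` of admissible permutation vectors for `T`: at a vertex with `k` children the
permutation fixes everything above `k` and permutes `{1,…,k}`; away from the tree it is the
identity. -/
def PermSet {S : Type*} (T : MTree S) : Set PermVec :=
  {σ | (∀ v ∈ T.verts,
          (∀ i : ℕ+, (i : ℕ) ≤ nChild T.verts v → ((σ v i : ℕ) ≤ nChild T.verts v)) ∧
          (∀ i : ℕ+, nChild T.verts v < (i : ℕ) → σ v i = i)) ∧
        ∀ v ∉ T.verts, σ v = 1}

/-- The law of the symmetrization of the (deterministic) tree `T`: the uniform average of the
point masses at `σ(T)`, `σ ∈ P_T`. -/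
def symKernel {S : Type*} [MeasurableSpace S] (T : MTree S) : Measure (MTree S) :=
  ((PermSet T).ncard : ℝ≥0∞)⁻¹ •
    Measure.sum (fun σ : ↥(PermSet T) => Measure.dirac (permApply (σ : PermVec) T))

/-- The symmetrization `ν^sym` of a law `ν` on labeled multitype plane trees. -/
def symLaw {S : Type*} [MeasurableSpace S] (ν : Measure (MTree S)) : Measure (MTree S) :=
  ν.bind symKernel

/-- A law is symmetric if it is equal to its symmetrization. -/
def IsSymmetricLaw {S : Type*} [MeasurableSpace S] (ν : Measure (MTree S)) : Prop :=
  symLaw ν = ν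

/-! ### Valid laws -/

/-- Forget the displacements of a labeled tree. -/
def shape {S : Type*} (T : MTree S) : MTree S := ⟨T.verts, T.type, fun _ => 0⟩

/-- The vector of displacements from `v` to its (first `k`) children. -/
def dispVecAt {S : Type*} (T : MTree S) (v : Vertex) (k : ℕ) : Fin k → ℝ :=
  fun i => T.disp (v ++ [(i : ℕ).succPNat])

/-- The child type vector of `v` (with `k` children). -/
def ctypeAt {S : Type*} (T : MTree S) (v : Vertex) (k : ℕ) : Fin k → S :=
  fun i => T.type (v ++ [(i : ℕ).succPNat])

/-- A family of displacement distributions: for each parent type and each child type vector of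
each length `k`, a measure on `ℝ^k`. -/
abbrev DispFamily (S : Type*) : Type _ :=
  S → (k : ℕ) → (Fin k → S) → Measure (Fin k → ℝ)

/-- `ν` has displacement family `π`: conditionally on the underlying typed tree, the displacement
vectors at the vertices are independent, with laws given by `π` evaluated at the type of a vertex
and its child type vector. -/
def HasDispFamily {S : Type*} [MeasurableSpace S] (ν : Measure (MTree S))
    (π : DispFamily S) : Prop :=
  (∀ r k s, IsProbabilityMeasure (π r k s)) ∧
  ∀ t : MTree S, ∀ B : (v : Vertex) → Set (Fin (nChild t.verts v) → ℝ),
    (∀ v, MeasurableSet (B v)) →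
    ν {T | shape T = shape t ∧ ∀ v ∈ t.verts, dispVecAt T v (nChild t.verts v) ∈ B v}
      = ν {T | shape T = shape t}
        * ∏ v ∈ t.verts, π (t.type v) (nChild t.verts v) (ctypeAt t v (nChild t.verts v)) (B v)

/-- A law on labeled multitype plane trees is valid if it is carried by plane trees, the law of
the underlying typed plane tree is symmetric, and the displacements admit a displacement family
as above. -/
def IsValidLaw {S : Type*} [MeasurableSpace S] (ν : Measure (MTree S)) : Prop :=
  ν {T | ¬ T.IsPlaneTree} = 0 ∧ IsSymmetricLaw (ν.map shape) ∧ ∃ π : DispFamily S, HasDispFamily ν π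

/-! ### Convergence in distribution -/

/-- Convergence in distribution of a sequence of random elements (defined on possibly different
probability spaces) towards a limiting random element: the expectations of every bounded
continuous functional converge. -/
def TendstoInDist {Ω : ℕ → Type*} [∀ n, MeasurableSpace (Ω n)]
    (P : ∀ n, Measure (Ω n)) {E : Type*} [TopologicalSpace E] (X : ∀ n, Ω n → E)
    {Ω₀ : Type*} [MeasurableSpace Ω₀] (P₀ : Measure Ω₀) (Y : Ω₀ → E) : Prop :=
  ∀ f : BoundedContinuousFunction E ℝ,
    Tendsto (fun n => ∫ ω, f (X n ω) ∂(P n)) atTop (𝓝 (∫ ω, f (Y ω) ∂P₀))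

/-- Tightness of a family of laws of random elements of a topological space. -/
def TightSeq {E : Type*} [TopologicalSpace E] {Ω : ℕ → Type*} [∀ n, MeasurableSpace (Ω n)]
    (P : ∀ n, Measure (Ω n)) (X : ∀ n, Ω n → E) : Prop :=
  ∀ ε : ℝ≥0∞, 0 < ε → ∃ K : Set E, IsCompact K ∧ ∀ n, P n {ω | X n ω ∉ K} ≤ ε

/-! ### Galton–Watson laws -/

instance {S : Type*} [MeasurableSpace S] : MeasurableSpace (List S) := ⊤

/-- The child type vector of `v`, as a list. -/
def ctypeList {S : Type*} (T : MTree S) (v : Vertex) : List S :=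
  (List.range (nChild T.verts v)).map fun m => T.type (v ++ [m.succPNat])

/-- `ν` is the law of a multitype Galton–Watson tree with offspring distributions `p`:
the `p s` are permutation-invariant probability measures on finite type sequences, and the
probability that the typed tree equals a given finite plane tree `t` is the product over the
vertices of `t` of the offspring probabilities of the child type vectors (times the probability
of the root type). -/
def IsGWLaw {S : Type*} [MeasurableSpace S] (ν : Measure (MTree S))
    (p : S → Measure (List S)) : Prop :=
  (∀ s, IsProbabilityMeasure (p s)) ∧
  (∀ s : S, ∀ l l' : List S, l.Perm l' → p s {l} = p s {l'}) ∧
  ∀ t : MTree S, t.IsPlaneTree →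
    ν {T | T.verts = t.verts ∧ ∀ v ∈ t.verts, T.type v = t.type v}
      = ν {T | T.type [] = t.type []} * ∏ v ∈ t.verts, p (t.type v) {ctypeList t v}

/-- A tree is normalized if its type and displacement functions take default values off the
vertex set, and (for unlabeled trees) all displacements vanish. -/
def Normalized {S : Type*} (s₀ : S) (T : MTree S) : Prop :=
  (∀ v ∉ T.verts, T.type v = s₀) ∧ T.disp = fun _ => 0

/-! ### Displacement families: symmetrization and centering -/

/-- The symmetrized displacement family `π^{sym}` defined by
`π^{u,sym}_s(B) = (1/k!) ∑_{σ ∈ 𝔖_k} π^u_{σ(s)}(σ(B))`. -/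
def symFamily {S : Type*} (π : DispFamily S) : DispFamily S := fun r k s =>
  ((Nat.factorial k : ℝ≥0∞))⁻¹ •
    ∑ σ : Equiv.Perm (Fin k),
      (π r k fun j => s (σ.symm j)).map fun x : Fin k → ℝ => fun j => x (σ j)

/-- A displacement family is locally centered if every coordinate of every displacement
distribution has mean zero. -/
def LocallyCentered {S : Type*} (π : DispFamily S) : Prop :=
  ∀ (r : S) (k : ℕ) (s : Fin k → S) (i : Fin k), (∫ x, x i ∂(π r k s)) = 0

/-- A displacement family is centered if, for every `k`, every parent type `r` and every vector
`z` of type counts summing to `k`, the sum over all ordered child type sequences with counts `z`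
of the total mean displacement is zero. -/
def Centered {S : Type*} (π : DispFamily S) : Prop :=
  ∀ (k : ℕ) (r : S) (z : S →₀ ℕ), (z.sum fun _ n => n) = k →
    (∑ᶠ s ∈ {s : Fin k → S | ∀ x : S,
        ((Finset.univ.filter fun i => s i = x).card = z x)},
      ∑ i : Fin k, ∫ x, x i ∂(π r k s)) = 0

/-! ### Subtrees spanned by finitely many vertices -/

/-- The vertex set of the subtree spanned by the vertices `r i` and their ancestors. -/
def spanVerts {k : ℕ} (r : Fin k → Vertex) : Finset Vertex :=
  insert ([] : Vertex) (Finset.univ.biUnion fun i => ((r i).inits).toFinset)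

/-- The rank of the child index `i` of `p` among the child indices present in `s`. -/
def childRank (s : Finset Vertex) (p : Vertex) (i : ℕ+) : ℕ+ :=
  ((s.filter fun w => ∃ j : ℕ+, j ≤ i ∧ w = p ++ [j]).card).toPNat'

def reindexAux (s : Finset Vertex) : Vertex → Vertex → Vertex
  | _, [] => []
  | p, i :: rest => childRank s p i :: reindexAux s (p ++ [i]) rest

/-- The Ulam–Harris label, in the plane tree with vertex set `s`, of the node corresponding to
the vertex `v ∈ s`: children are relabeled consecutively, preserving their order. -/
def reindex (s : Finset Vertex) (v : Vertex) : Vertex := reindexAux s [] v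

/-- The set of child indices of `p` present in `s`. -/
def childIdxs (s : Finset Vertex) (p : Vertex) : Finset ℕ+ :=
  (s.filter fun w => ∃ i : ℕ+, w = p ++ [i]).image fun w => w.getLastD 1

/-- The `m`-th smallest child index of `p` present in `s`. -/
def nthChildIndex (s : Finset Vertex) (p : Vertex) (m : ℕ+) : ℕ+ :=
  ((childIdxs s p).sort (· ≤ ·)).getD ((m : ℕ) - 1) 1

def unIndexAux (s : Finset Vertex) : Vertex → Vertex → Vertex
  | _, [] => []
  | p, m :: rest =>
      nthChildIndex s p m :: unIndexAux s (p ++ [nthChildIndex s p m]) rest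

/-- The inverse of `reindex s`. -/
def unIndex (s : Finset Vertex) (w : Vertex) : Vertex := unIndexAux s [] w

/-- The labeled subtree of `T` with vertex set `s ⊆ T.verts`, viewed as a plane tree (with the
plane structure, the types and the displacements inherited from `T`). -/
def spanTree {S : Type*} (T : MTree S) (s : Finset Vertex) : MTree S :=
  ⟨s.image (reindex s), fun w => T.type (unIndex s w), fun w => T.disp (unIndex s w)⟩

/-- The labeled subtree of `T` with vertex set `s`, with the displacements on child edges of
branchpoints replaced by `0` (the modified labeling `d⟨·⟩`). -/
def spanTreeMod {S : Type*} (T : MTree S) (s : Finset Vertex) : MTree S :=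
  ⟨(spanTree T s).verts, (spanTree T s).type,
    fun w => if nChild (spanTree T s).verts w.dropLast = 1 then (spanTree T s).disp w else 0⟩

/-- `R` is a uniform sample of `k` vertices from the random labeled tree `X`: conditionally on
`X`, the coordinates of `R` are independent and uniformly distributed on the vertex set of `X`. -/
def UniformSample {Ω : Type*} [MeasurableSpace Ω] (P : Measure Ω) {S : Type*} [MeasurableSpace S]
    (X : Ω → MTree S) {k : ℕ} (R : Ω → Fin k → Vertex) : Prop :=
  ∀ A : Set (MTree S), MeasurableSet A → ∀ r : Fin k → Vertex,
    P {ω | X ω ∈ A ∧ R ω = r}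
      = ∫⁻ ω in {ω | X ω ∈ A},
          (if ∀ i, r i ∈ (X ω).verts then (((X ω).verts.card : ℝ≥0∞) ^ k)⁻¹ else 0) ∂P

/-! ### Lexicographic enumeration, height process -/

/-- The vertices of `t` in lexicographic order. -/
def lexEnum (t : Finset Vertex) : List Vertex := t.sort (· ≤ ·)

/-- The `i`-th vertex in lexicographic order (`v_{|t|} = v_0` by convention, since `v_0` is the
root `[]`, which is also the default value). -/
def lexVertex (t : Finset Vertex) (i : ℕ) : Vertex := (lexEnum t).getD i []

/-- The height process `H_t`, as a function on `ℝ`. -/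
def heightFun {S : Type*} (T : MTree S) (s : ℝ) : ℝ :=
  interpFun T.verts.card (fun i => ((lexVertex T.verts i).length : ℝ)) s

/-- The lexicographic label process `S_t`, as a function on `ℝ`. -/
def lexLabelFun {S : Type*} (T : MTree S) (s : ℝ) : ℝ :=
  interpFun T.verts.card (fun i => labelOf T (lexVertex T.verts i)) s

/-- The height process `H_t`, as a continuous map on `[0,1]`. -/
def heightProcess {S : Type*} (T : MTree S) : C(unitInterval, ℝ) :=
  interpMap T.verts.card fun i => ((lexVertex T.verts i).length : ℝ)

/-- The lexicographic label process `S_t`, as a continuous map on `[0,1]`. -/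
def lexLabelProcess {S : Type*} (T : MTree S) : C(unitInterval, ℝ) :=
  interpMap T.verts.card fun i => labelOf T (lexVertex T.verts i)

/-- `j_t(i) = 2i - h(v_i)` for `i < |t|`, and `j_t(i) = 2|t| - 2` otherwise. -/
def jIdx (t : Finset Vertex) (i : ℕ) : ℕ :=
  if i < t.card then 2 * i - (lexVertex t i).length else 2 * t.card - 2

/-- `φ_t(s) = |t|⁻¹ · sup {i ≤ |t| : j_t(i) ≤ s(2|t|-2)}`. -/
def phi (t : Finset Vertex) (s : ℝ) : ℝ :=
  ((sSup {i : ℕ | i ≤ t.card ∧ (jIdx t i : ℝ) ≤ s * (2 * t.card - 2)} : ℕ) : ℝ) / t.card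

/-- The increasing reordering of the finite vector `f`. -/
def sortFun {k : ℕ} (f : Fin k → ℝ) (i : ℕ) : ℝ :=
  ((List.ofFn f).insertionSort (· ≤ ·)).getD i 0

instance : MeasurableSpace C(unitInterval, ℝ) := borel _



/-! ### Auxiliary lemmas for Statement 7 -/

section Aux7

open scoped Classical

-- ---------- contour combinatorics ----------

lemma contourHist_succ' (t : Finset Vertex) (n : ℕ) :
    contourHist t (n+1) =
    (if (∃ m : ℕ, theta t n ++ [m.succPNat] ∈ t ∧ theta t n ++ [m.succPNat] ∉ contourHist t n) then
      (theta t n ++ [(sInf {m : ℕ | theta t n ++ [m.succPNat] ∈ t ∧ theta t n ++ [m.succPNat] ∉ contourHist t n}).succPNat]) :: contourHist t n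
    else
      (theta t n).dropLast :: contourHist t n) := by
  rw [contourHist]
  rfl

lemma theta_succ' (t : Finset Vertex) (n : ℕ) :
    theta t (n+1) =
    (if (∃ m : ℕ, theta t n ++ [m.succPNat] ∈ t ∧ theta t n ++ [m.succPNat] ∉ contourHist t n) then
      theta t n ++ [(sInf {m : ℕ | theta t n ++ [m.succPNat] ∈ t ∧ theta t n ++ [m.succPNat] ∉ contourHist t n}).succPNat]
    else
      (theta t n).dropLast) := by
  show (contourHist t (n+1)).headI = _
  rw [contourHist_succ']
  split_ifs with h <;> rfl

lemma theta_step' (t : Finset Vertex) (n : ℕ) :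
    (∃ c : ℕ+, theta t (n+1) = theta t n ++ [c]) ∨ theta t (n+1) = (theta t n).dropLast := by
  rw [theta_succ']
  split_ifs with h
  · exact Or.inl ⟨_, rfl⟩
  · exact Or.inr rfl

lemma lcpLen_comm (u v : Vertex) : lcpLen u v = lcpLen v u := by
  induction u generalizing v with
  | nil => cases v <;> rfl
  | cons a u ih =>
    cases v with
    | nil => rfl
    | cons b v =>
      by_cases h : a = b
      · subst h; simp [lcpLen, ih]
      · have h' : ¬ b = a := fun hh => h hh.symm
        simp [lcpLen, h, h']

lemma lcpLen_self (v : Vertex) : lcpLen v v = v.length := by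
  induction v with
  | nil => rfl
  | cons a u ih => simp [lcpLen, ih]

lemma treeDist_self' (v : Vertex) : treeDist v v = 0 := by
  simp [treeDist, lcpLen_self]; omega

lemma treeDist_comm (u v : Vertex) : treeDist u v = treeDist v u := by
  unfold treeDist
  rw [lcpLen_comm, Nat.add_comm]

lemma lcpLen_ge_of_prefix {a u v : Vertex} (hu : a <+: u) (hv : a <+: v) :
    a.length ≤ lcpLen u v := by
  induction a generalizing u v with
  | nil => simp
  | cons x a ih =>
    obtain ⟨r, rfl⟩ := hu
    obtain ⟨s, rfl⟩ := hv
    simpa [lcpLen] using ih (List.prefix_append a r) (List.prefix_append a s)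

lemma prefix_dropLast' {a l : Vertex} (h : a <+: l) (hlen : a.length ≤ l.dropLast.length) :
    a <+: l.dropLast := by
  rw [List.prefix_iff_eq_take] at h ⊢
  rw [List.dropLast_eq_take, List.take_take]
  rw [List.length_dropLast] at hlen
  rw [min_eq_left hlen]
  exact h

lemma take_prefix_theta (t : Finset Vertex) (m : ℕ) (i : ℕ) :
    ∀ j, i ≤ j → (∀ k, i ≤ k → k ≤ j → m ≤ (theta t k).length) →
    (theta t i).take m <+: theta t j := by
  intro j
  induction j with
  | zero =>
    intro hij _
    interval_cases i
    exact List.take_prefix _ _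
  | succ j ih =>
    intro hij hmin
    rcases Nat.lt_or_ge i (j+1) with hlt | hge
    · have hij' : i ≤ j := by omega
      have hpre : (theta t i).take m <+: theta t j :=
        ih hij' (fun k hk hk' => hmin k hk (by omega))
      have hlenm : ((theta t i).take m).length = m := by
        rw [List.length_take]
        exact min_eq_left (hmin i le_rfl (by omega))
      rcases theta_step' t j with ⟨c, hc⟩ | hc
      · rw [hc]
        exact hpre.trans (List.prefix_append _ _)
      · rw [hc]
        apply prefix_dropLast' hpre
        rw [hlenm, ← hc]
        exact hmin (j+1) (by omega) le_rfl
    · have : i = j + 1 := by omega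
      subst this
      exact List.take_prefix _ _

lemma treeDist_le_osc (t : Finset Vertex) {i j m : ℕ} (hij : i ≤ j)
    (hmin : ∀ k, i ≤ k → k ≤ j → m ≤ (theta t k).length) :
    treeDist (theta t i) (theta t j)
      ≤ ((theta t i).length - m) + ((theta t j).length - m) := by
  have h1 : (theta t i).take m <+: theta t i := List.take_prefix _ _
  have h2 : (theta t i).take m <+: theta t j := take_prefix_theta t m i j hij hmin
  have hlen : ((theta t i).take m).length = m := by
    rw [List.length_take]; exact min_eq_left (hmin i le_rfl hij)
  have hlcp : m ≤ lcpLen (theta t i) (theta t j) := by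
    rw [← hlen]; exact lcpLen_ge_of_prefix h1 h2
  have hmi : m ≤ (theta t i).length := hmin i le_rfl hij
  have hmj : m ≤ (theta t j).length := hmin j hij le_rfl
  unfold treeDist
  omega

-- ---------- interpolation at grid points ----------

lemma interpFun_grid {n : ℕ} (hn : 0 < n) (f : ℕ → ℝ) {i : ℕ} (hi : i ≤ n) :
    interpFun n f ((i : ℝ) / n) = f i := by
  unfold interpFun
  have hn' : (n : ℝ) ≠ 0 := Nat.cast_ne_zero.mpr hn.ne'
  have hs : (i : ℝ) / n * n = i := by field_simp
  rw [hs]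
  have hterm : ∀ k ∈ Finset.range n,
      (f (k + 1) - f k) * max 0 (min 1 ((i : ℝ) - k))
        = if k < i then f (k+1) - f k else 0 := by
    intro k _
    by_cases hk : k < i
    · have h1 : (1 : ℝ) ≤ (i : ℝ) - k := by
        have : (k : ℝ) + 1 ≤ i := by exact_mod_cast hk
        linarith
      rw [min_eq_left h1, max_eq_right zero_le_one, mul_one, if_pos hk]
    · have h0 : (i : ℝ) - k ≤ 0 := by
        have : (i : ℝ) ≤ k := by exact_mod_cast Nat.le_of_not_lt hk
        linarith
      rw [min_eq_right (by linarith : (i:ℝ) - k ≤ 1), max_eq_left h0, mul_zero, if_neg hk]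
  rw [Finset.sum_congr rfl hterm, ← Finset.sum_filter]
  have hfil : (Finset.range n).filter (fun k => k < i) = Finset.range i := by
    ext k
    simp only [Finset.mem_filter, Finset.mem_range]
    omega
  rw [hfil, Finset.sum_range_sub]
  ring

-- ---------- modulus of continuity ----------

/-- modulus of continuity of a continuous map on `[0,1]` -/
noncomputable def Mod (delta : ℝ) (x : C(unitInterval, ℝ)) : ℝ :=
  sSup ((fun p : unitInterval × unitInterval => |x p.1 - x p.2|) ''
    {p | |(p.1 : ℝ) - (p.2 : ℝ)| ≤ delta})

lemma Mod_bddAbove (delta : ℝ) (x : C(unitInterval, ℝ)) :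
    BddAbove ((fun p : unitInterval × unitInterval => |x p.1 - x p.2|) ''
      {p | |(p.1 : ℝ) - (p.2 : ℝ)| ≤ delta}) := by
  refine ⟨2 * ‖x‖, ?_⟩
  rintro y ⟨p, _, rfl⟩
  calc |x p.1 - x p.2| ≤ ‖x p.1‖ + ‖x p.2‖ := by
        rw [Real.norm_eq_abs, Real.norm_eq_abs]; exact abs_sub _ _
    _ ≤ 2 * ‖x‖ := by
        have h1 := x.norm_coe_le_norm p.1
        have h2 := x.norm_coe_le_norm p.2
        linarith

lemma le_Mod {delta : ℝ} (x : C(unitInterval, ℝ)) {s t : unitInterval}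
    (h : |(s : ℝ) - (t : ℝ)| ≤ delta) : |x s - x t| ≤ Mod delta x :=
  le_csSup (Mod_bddAbove delta x) ⟨(s, t), h, rfl⟩

lemma Mod_nonneg (delta : ℝ) (x : C(unitInterval, ℝ)) (hd : 0 ≤ delta) : 0 ≤ Mod delta x := by
  have := le_Mod x (s := 0) (t := 0) (by simpa using hd)
  simp at this
  linarith [abs_nonneg ((x 0) - (x 0))]

lemma Mod_le {delta : ℝ} {x : C(unitInterval, ℝ)} {c : ℝ} (hc : 0 ≤ c)
    (h : ∀ s t : unitInterval, |(s : ℝ) - (t : ℝ)| ≤ delta → |x s - x t| ≤ c) :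
    Mod delta x ≤ c := by
  apply Real.sSup_le _ hc
  rintro y ⟨p, hp, rfl⟩
  exact h p.1 p.2 hp

lemma Mod_lipschitz (delta : ℝ) (hd : 0 ≤ delta) :
    LipschitzWith 2 (fun x : C(unitInterval, ℝ) => Mod delta x) := by
  apply LipschitzWith.of_dist_le_mul
  intro x y
  have key : ∀ x y : C(unitInterval, ℝ), Mod delta x ≤ Mod delta y + 2 * dist x y := by
    intro x y
    apply Real.sSup_le
    · rintro z ⟨p, hp, rfl⟩
      have h1 : |x p.1 - x p.2| ≤ |y p.1 - y p.2| + 2 * dist x y := by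
        have d1 : dist (x p.1) (y p.1) ≤ dist x y := ContinuousMap.dist_apply_le_dist _
        have d2 : dist (x p.2) (y p.2) ≤ dist x y := ContinuousMap.dist_apply_le_dist _
        rw [Real.dist_eq] at d1 d2
        have : |x p.1 - x p.2| ≤ |x p.1 - y p.1| + |y p.1 - y p.2| + |y p.2 - x p.2| := by
          calc |x p.1 - x p.2| ≤ |x p.1 - y p.1| + |y p.1 - x p.2| := abs_sub_le _ _ _
            _ ≤ |x p.1 - y p.1| + (|y p.1 - y p.2| + |y p.2 - x p.2|) := by
                linarith [abs_sub_le (y p.1) (y p.2) (x p.2)]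
            _ = _ := by ring
        have e2 : |y p.2 - x p.2| = |x p.2 - y p.2| := abs_sub_comm _ _
        linarith
      exact h1.trans (by linarith [le_Mod y hp])
    · have := Mod_nonneg delta y hd
      have := dist_nonneg (x := x) (y := y)
      linarith
  have h1 := key x y
  have h2 := key y x
  rw [dist_comm y x] at h2
  have hc : ((2 : ℝ≥0) : ℝ) = 2 := by norm_num
  rw [Real.dist_eq, hc, abs_le]
  constructor <;> linarith

lemma Mod_continuous (delta : ℝ) (hd : 0 ≤ delta) :
    Continuous (fun x : C(unitInterval, ℝ) => Mod delta x) :=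
  (Mod_lipschitz delta hd).continuous

-- ---------- the cutoff function ----------

/-- continuous cutoff: `0` below `β/4`, `1` above `β/2` -/
noncomputable def phiCut (beta r : ℝ) : ℝ := min 1 (max 0 ((4/beta) * (r - beta/4)))

lemma phiCut_continuous (beta : ℝ) : Continuous (phiCut beta) :=
  continuous_const.min (continuous_const.max
    (continuous_const.mul (continuous_id.sub continuous_const)))

lemma phiCut_nonneg (beta r : ℝ) : 0 ≤ phiCut beta r :=
  le_min zero_le_one (le_max_left _ _)

lemma phiCut_le_one (beta r : ℝ) : phiCut beta r ≤ 1 := min_le_left _ _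

lemma phiCut_eq_one {beta r : ℝ} (hb : 0 < beta) (hr : beta/2 ≤ r) : phiCut beta r = 1 := by
  have h1 : (1 : ℝ) ≤ (4/beta) * (r - beta/4) := by
    have h4 : (4/beta) * (beta/4) = 1 := by field_simp
    have h5 : (4/beta) * (beta/4) ≤ (4/beta) * (r - beta/4) :=
      mul_le_mul_of_nonneg_left (by linarith) (by positivity)
    linarith
  unfold phiCut
  rw [max_eq_right (le_trans zero_le_one h1), min_eq_left h1]

lemma phiCut_eq_zero {beta r : ℝ} (hb : 0 < beta) (hr : r ≤ beta/4) : phiCut beta r = 0 := by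
  have h1 : (4/beta) * (r - beta/4) ≤ 0 := by
    apply mul_nonpos_of_nonneg_of_nonpos (by positivity)
    linarith
  unfold phiCut
  rw [max_eq_left h1]
  exact min_eq_right zero_le_one

-- ---------- measure-theoretic transfer ----------

variable {S : Type*} [MeasurableSpace S]

/-- the admissible permutation set as a function of the vertex set only -/
def permSetV (t : Finset Vertex) : Set PermVec :=
  {σ | (∀ v ∈ t,
          (∀ i : ℕ+, (i : ℕ) ≤ nChild t v → ((σ v i : ℕ) ≤ nChild t v)) ∧
          (∀ i : ℕ+, nChild t v < (i : ℕ) → σ v i = i)) ∧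
        ∀ v ∉ t, σ v = 1}

lemma permSet_eq (T : MTree S) : PermSet T = permSetV T.verts := rfl

lemma nChild_le_card (t : Finset Vertex) (v : Vertex) : nChild t v ≤ t.card :=
  Finset.card_filter_le _ _

lemma permSetV_finite (t : Finset Vertex) : (permSetV t).Finite := by
  classical
  have : ∀ σ ∈ permSetV t, ∀ v ∈ t, ∀ i : ℕ+, (i : ℕ) ≤ t.card → ((σ v i : ℕ)) ≤ t.card := by
    intro σ hσ v hv i hi
    rcases Nat.lt_or_ge (nChild t v) (i : ℕ) with h | h
    · rw [(hσ.1 v hv).2 i h]; exact hi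
    · exact le_trans ((hσ.1 v hv).1 i h) (nChild_le_card t v)
  set F : PermVec → ({x // x ∈ t} → Fin t.card → Fin (t.card+1)) :=
    fun σ v j => ⟨(σ v.1 (Nat.succPNat j.1) : ℕ) % (t.card+1), Nat.mod_lt _ (Nat.succ_pos t.card)⟩ with hF
  apply Set.Finite.of_finite_image (f := F)
  · exact Set.toFinite _
  · intro σ hσ σ' hσ' hFeq
    funext v
    by_cases hv : v ∈ t
    · apply Equiv.ext
      intro i
      rcases Nat.lt_or_ge (nChild t v) (i : ℕ) with h | h
      · rw [(hσ.1 v hv).2 i h, (hσ'.1 v hv).2 i h]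
      · have hipos : 0 < (i : ℕ) := i.2
        have hiK : (i : ℕ) ≤ t.card := le_trans h (nChild_le_card t v)
        have hjlt : (i : ℕ) - 1 < t.card := by omega
        have := congrFun (congrFun hFeq ⟨v, hv⟩) ⟨(i : ℕ) - 1, hjlt⟩
        simp only [hF, Fin.mk.injEq] at this
        have hsucc : Nat.succPNat ((i : ℕ) - 1) = i := by
          apply PNat.coe_injective
          rw [Nat.succPNat_coe]
          omega
        rw [hsucc] at this
        have b1 : (σ v i : ℕ) ≤ t.card :=
          le_trans ((hσ.1 v hv).1 i h) (nChild_le_card t v)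
        have b2 : (σ' v i : ℕ) ≤ t.card :=
          le_trans ((hσ'.1 v hv).1 i h) (nChild_le_card t v)
        rw [Nat.mod_eq_of_lt (by omega), Nat.mod_eq_of_lt (by omega)] at this
        exact PNat.coe_injective this
    · rw [hσ.2 v hv, hσ'.2 v hv]

lemma measurable_triple : Measurable (fun T : MTree S => (T.verts, T.type, T.disp)) :=
  measurable_iff_comap_le.mpr le_rfl

lemma measurable_verts : Measurable (fun T : MTree S => T.verts) :=
  measurable_fst.comp measurable_triple

lemma measurable_type : Measurable (fun T : MTree S => T.type) :=
  (measurable_fst.comp measurable_snd).comp measurable_triple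

lemma measurable_disp : Measurable (fun T : MTree S => T.disp) :=
  (measurable_snd.comp measurable_snd).comp measurable_triple

lemma measurableSet_verts (W : Set (Finset Vertex)) :
    MeasurableSet {T : MTree S | T.verts ∈ W} :=
  measurable_verts (MeasurableSpace.measurableSet_top (s := W))

lemma measurable_mk {α : Type*} [MeasurableSpace α] {g : α → MTree S}
    (h1 : Measurable fun a => (g a).verts) (h2 : Measurable fun a => (g a).type)
    (h3 : Measurable fun a => (g a).disp) : Measurable g := by
  intro s hs
  obtain ⟨s', hs', rfl⟩ := hs
  exact (h1.prodMk (h2.prodMk h3)) hs'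

lemma measurable_permApply (σ : PermVec) : Measurable (permApply (S := S) σ) := by
  apply measurable_mk
  · exact (measurable_from_top (f := fun t : Finset Vertex => t.image (permWord σ))).comp
      measurable_verts
  · apply measurable_pi_lambda
    intro w
    exact (measurable_pi_apply (invWord σ w)).comp measurable_type
  · apply measurable_pi_lambda
    intro w
    exact (measurable_pi_apply (invWord σ w)).comp measurable_disp

lemma measurable_shape : Measurable (shape (S := S)) := by
  apply measurable_mk
  · exact measurable_verts
  · exact measurable_type
  · exact measurable_const

lemma symKernel_apply (T : MTree S) {A : Set (MTree S)} (hA : MeasurableSet A) :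
    symKernel T A = ((PermSet T).ncard : ℝ≥0∞)⁻¹ *
      ∑' σ : ↥(PermSet T), A.indicator 1 (permApply (σ : PermVec) T) := by
  rw [symKernel, Measure.smul_apply, Measure.sum_apply _ hA, smul_eq_mul]
  congr 1
  exact tsum_congr fun σ => Measure.dirac_apply' _ hA

lemma measurable_symKernel_apply {A : Set (MTree S)} (hA : MeasurableSet A) :
    Measurable (fun T : MTree S => symKernel T A) := by
  have key : (fun T : MTree S => symKernel T A) = fun T =>
      ∑' t₀ : Finset Vertex, Set.indicator {T' : MTree S | T'.verts = t₀}
        (fun T' => ((permSetV t₀).ncard : ℝ≥0∞)⁻¹ *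
          ∑' σ : ↥(permSetV t₀), A.indicator 1 (permApply (σ : PermVec) T')) T := by
    funext T
    have h0 : ∀ t₀ : Finset Vertex, t₀ ≠ T.verts →
        Set.indicator {T' : MTree S | T'.verts = t₀}
          (fun T' => ((permSetV t₀).ncard : ℝ≥0∞)⁻¹ *
            ∑' σ : ↥(permSetV t₀), A.indicator 1 (permApply (σ : PermVec) T')) T = 0 :=
      fun t₀ ht₀ => by
        apply Set.indicator_of_notMem
        exact fun h => ht₀ (Eq.symm h)
    rw [tsum_eq_single T.verts h0,
      Set.indicator_of_mem (show T ∈ {T' : MTree S | T'.verts = T.verts} from rfl),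
      symKernel_apply T hA, permSet_eq]
  rw [key]
  apply Measurable.ennreal_tsum
  intro t₀
  haveI : Finite ↥(permSetV t₀) := (permSetV_finite t₀).to_subtype
  haveI : Countable ↥(permSetV t₀) := Finite.to_countable
  apply Measurable.indicator
  · apply Measurable.const_mul
    apply Measurable.ennreal_tsum
    intro σ
    exact (measurable_one.indicator hA).comp (measurable_permApply _)
  · exact measurableSet_verts {t₀}

lemma measurable_symKernel : Measurable (symKernel (S := S)) :=
  Measure.measurable_of_measurable_coe _ fun _ hA => measurable_symKernel_apply hA

lemma symLaw_apply (ν : Measure (MTree S)) {A : Set (MTree S)} (hA : MeasurableSet A) :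
    symLaw ν A = ∫⁻ T, symKernel T A ∂ν :=
  Measure.bind_apply hA measurable_symKernel.aemeasurable

lemma permSet_shape (T : MTree S) : PermSet (shape T) = PermSet T := rfl

lemma symKernel_shape (T : MTree S) {A : Set (MTree S)} (hA : MeasurableSet A) :
    symKernel T (shape ⁻¹' A) = symKernel (shape T) A := by
  rw [symKernel_apply T (measurable_shape hA), symKernel_apply (shape T) hA]
  rw [permSet_shape]
  rfl

lemma symLaw_map_shape (ν : Measure (MTree S)) :
    (symLaw ν).map shape = symLaw (ν.map shape) := by
  apply Measure.ext
  intro A hA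
  rw [Measure.map_apply measurable_shape hA, symLaw_apply ν (measurable_shape hA),
    symLaw_apply (ν.map shape) hA,
    lintegral_map (measurable_symKernel_apply hA) measurable_shape]
  exact lintegral_congr fun T => symKernel_shape T hA

lemma symLaw_verts (ν : Measure (MTree S)) (hs : IsSymmetricLaw (ν.map shape))
    (W : Set (Finset Vertex)) :
    symLaw ν {T : MTree S | T.verts ∈ W} = ν {T : MTree S | T.verts ∈ W} := by
  have hpre : shape ⁻¹' {T : MTree S | T.verts ∈ W} = {T : MTree S | T.verts ∈ W} := rfl
  have h1 : symLaw ν {T : MTree S | T.verts ∈ W}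
      = ((symLaw ν).map shape) {T : MTree S | T.verts ∈ W} := by
    rw [Measure.map_apply measurable_shape (measurableSet_verts W), hpre]
  rw [h1, symLaw_map_shape, hs, Measure.map_apply measurable_shape (measurableSet_verts W),
    hpre]

-- ---------- contour process as a function of the vertex set ----------

/-- the contour process as a function of the vertex set -/
noncomputable def cpV (t : Finset Vertex) : C(unitInterval, ℝ) :=
  interpMap (2 * t.card - 2) fun i => ((theta t i).length : ℝ)

lemma contourProcess_eq_cpV (T : MTree S) : contourProcess T = cpV T.verts := rfl

instance : BorelSpace C(unitInterval, ℝ) := ⟨rfl⟩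

-- ---------- the key deterministic estimate ----------

lemma event_mod {t : Finset Vertex} {α β an : ℝ} (hα : 0 < α) (han : 0 < an) (hβ : 0 < β)
    (h : ∃ i j : ℕ, i ≤ 2 * t.card - 2 ∧ j ≤ 2 * t.card - 2 ∧
        i ≤ j + ⌊α * (t.card : ℝ)⌋₊ ∧ j ≤ i + ⌊α * (t.card : ℝ)⌋₊ ∧
        β < an * (treeDist (theta t i) (theta t j) : ℝ)) :
    β / 2 ≤ Mod α (an • cpV t) := by
  -- first reduce to the case i ≤ j
  obtain ⟨i, j, hiN, hjN, hw1, hw2, hd⟩ := h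
  wlog hij : i ≤ j generalizing i j
  · exact this j i hjN hiN hw2 hw1 (by rwa [treeDist_comm]) (by omega)
  -- the tree has at least 2 vertices
  by_cases hcard : 2 * t.card - 2 = 0
  · exfalso
    have hi0 : i = 0 := by omega
    have hj0 : j = 0 := by omega
    rw [hi0, hj0, treeDist_self'] at hd
    simp at hd
    linarith
  have hcard2 : 2 ≤ t.card := by omega
  set N : ℕ := 2 * t.card - 2 with hN
  have hNpos : 0 < N := by omega
  -- the minimum of the contour over the window
  obtain ⟨km, hkm, hkmin⟩ := Finset.exists_min_image (Finset.Icc i j)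
    (fun k => (theta t k).length) ⟨i, Finset.mem_Icc.mpr ⟨le_rfl, hij⟩⟩
  rw [Finset.mem_Icc] at hkm
  set m : ℕ := (theta t km).length with hm
  have hmin : ∀ k, i ≤ k → k ≤ j → m ≤ (theta t k).length := fun k h1 h2 =>
    hkmin k (Finset.mem_Icc.mpr ⟨h1, h2⟩)
  have hosc := treeDist_le_osc t hij hmin
  have hmi : m ≤ (theta t i).length := hmin i le_rfl hij
  have hmj : m ≤ (theta t j).length := hmin j hij le_rfl
  -- one of the two "legs" is large
  have hleg : β/2 < an * (((theta t i).length : ℝ) - m) ∨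
      β/2 < an * (((theta t j).length : ℝ) - m) := by
    by_contra hcon
    push_neg at hcon
    have hcast : (treeDist (theta t i) (theta t j) : ℝ)
        ≤ (((theta t i).length : ℝ) - m) + (((theta t j).length : ℝ) - m) := by
      have := hosc
      have h1 : ((((theta t i).length - m) + ((theta t j).length - m) : ℕ) : ℝ)
          = (((theta t i).length : ℝ) - m) + (((theta t j).length : ℝ) - m) := by
        push_cast [Nat.cast_sub hmi, Nat.cast_sub hmj]
        ring
      calc (treeDist (theta t i) (theta t j) : ℝ)
          ≤ ((((theta t i).length - m) + ((theta t j).length - m) : ℕ) : ℝ) := by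
            exact_mod_cast this
        _ = _ := h1
    have : an * (treeDist (theta t i) (theta t j) : ℝ)
        ≤ an * ((((theta t i).length : ℝ) - m) + (((theta t j).length : ℝ) - m)) :=
      mul_le_mul_of_nonneg_left hcast han.le
    rw [mul_add] at this
    linarith [hcon.1, hcon.2]
  -- select the large leg
  obtain ⟨i₀, hi₀N, hi₀w, hleg'⟩ :
      ∃ i₀, i₀ ≤ N ∧ (i ≤ i₀ ∧ i₀ ≤ j) ∧ β/2 < an * (((theta t i₀).length : ℝ) - m) := by
    rcases hleg with h | h
    · exact ⟨i, hiN, ⟨le_rfl, hij⟩, h⟩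
    · exact ⟨j, hjN, ⟨hij, le_rfl⟩, h⟩
  -- points in the unit interval
  have hkmN : km ≤ N := le_trans hkm.2 hjN
  have hNr : (0:ℝ) < (N : ℝ) := by exact_mod_cast hNpos
  have hmem : ∀ {k : ℕ}, k ≤ N → ((k : ℝ) / N) ∈ unitInterval := by
    intro k hk
    constructor
    · positivity
    · rw [div_le_one hNr]
      exact_mod_cast hk
  set s₀ : unitInterval := ⟨(i₀ : ℝ) / N, hmem hi₀N⟩ with hs₀
  set t₀ : unitInterval := ⟨(km : ℝ) / N, hmem hkmN⟩ with ht₀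
  -- evaluation of the scaled contour process at grid points
  have heval : ∀ {k : ℕ}, k ≤ N → ∀ (hk : ((k : ℝ) / N) ∈ unitInterval),
      (an • cpV t) ⟨(k : ℝ) / N, hk⟩ = an * ((theta t k).length : ℝ) := by
    intro k hk hk'
    have : (cpV t) ⟨(k : ℝ) / N, hk'⟩ = ((theta t k).length : ℝ) := by
      show interpFun N (fun i => ((theta t i).length : ℝ)) ((k : ℝ) / N) = _
      exact interpFun_grid hNpos _ hk
    calc (an • cpV t) ⟨(k : ℝ) / N, hk'⟩ = an • ((cpV t) ⟨(k : ℝ) / N, hk'⟩) := rfl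
      _ = an * ((theta t k).length : ℝ) := by rw [this]; rfl
  -- distance between the two grid points
  have hwfloor : ((j - i : ℕ) : ℝ) ≤ α * t.card := by
    have hji : j - i ≤ ⌊α * (t.card : ℝ)⌋₊ := by omega
    calc ((j - i : ℕ) : ℝ) ≤ (⌊α * (t.card : ℝ)⌋₊ : ℝ) := by exact_mod_cast hji
      _ ≤ α * t.card := Nat.floor_le (by positivity)
  have hcardN : (t.card : ℝ) ≤ (N : ℝ) := by
    have : t.card ≤ N := by omega
    exact_mod_cast this
  have hdistpts : |(s₀ : ℝ) - (t₀ : ℝ)| ≤ α := by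
    have h1 : |(s₀ : ℝ) - (t₀ : ℝ)| = |(i₀ : ℝ) - km| / N := by
      rw [hs₀, ht₀]
      show |(i₀ : ℝ)/N - (km : ℝ)/N| = _
      rw [div_sub_div_same, abs_div, abs_of_pos hNr]
    have h2 : |(i₀ : ℝ) - (km : ℝ)| ≤ ((j - i : ℕ) : ℝ) := by
      rw [abs_le]
      have c1 : (i:ℝ) ≤ i₀ := by exact_mod_cast hi₀w.1
      have c2 : (i₀:ℝ) ≤ j := by exact_mod_cast hi₀w.2
      have c3 : (i:ℝ) ≤ km := by exact_mod_cast hkm.1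
      have c4 : (km:ℝ) ≤ j := by exact_mod_cast hkm.2
      have c5 : ((j - i : ℕ) : ℝ) = (j:ℝ) - i := by
        push_cast [Nat.cast_sub hij]
        ring
      constructor <;> [skip; skip] <;> rw [c5] at * <;> [linarith; linarith]
    rw [h1]
    rw [div_le_iff₀ hNr]
    calc |(i₀ : ℝ) - (km : ℝ)| ≤ ((j - i : ℕ) : ℝ) := h2
      _ ≤ α * t.card := hwfloor
      _ ≤ α * N := by
          apply mul_le_mul_of_nonneg_left hcardN hα.le
  -- conclude
  have hval : |(an • cpV t) s₀ - (an • cpV t) t₀|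
      = an * (((theta t i₀).length : ℝ) - m) := by
    rw [heval hi₀N (hmem hi₀N), heval hkmN (hmem hkmN)]
    rw [← mul_sub]
    rw [abs_of_nonneg]
    apply mul_nonneg han.le
    have : (m : ℝ) ≤ ((theta t i₀).length : ℝ) := by
      exact_mod_cast hmin i₀ hi₀w.1 hi₀w.2
    linarith
  have := le_Mod (an • cpV t) hdistpts
  rw [hval] at this
  linarith

end Aux7

/-- Lemma 3.3. Under the hypotheses of the symmetrization theorem, for all
`β > 0` there exists `α = α(β) > 0` such that
`limsup_n P(sup_{|i-j| ≤ ⌊α|T_n|⌋} a_n · dist(θ_{T_n}(i), θ_{T_n}(j)) > β) < β`. -/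
theorem statement7 {S : Type*} [Countable S] [MeasurableSpace S]
    {Ω : ℕ → Type*} [∀ n, MeasurableSpace (Ω n)]
    (P : ∀ n, Measure (Ω n)) (hP : ∀ n, IsProbabilityMeasure (P n))
    (X : ∀ n, Ω n → MTree S) (hX : ∀ n, Measurable (X n))
    (hvalid : ∀ n, IsValidLaw ((P n).map (X n)))
    {Ω' : ℕ → Type*} [∀ n, MeasurableSpace (Ω' n)]
    (P' : ∀ n, Measure (Ω' n)) (hP' : ∀ n, IsProbabilityMeasure (P' n))
    (Xs : ∀ n, Ω' n → MTree S) (hXs : ∀ n, Measurable (Xs n))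
    (hsym : ∀ n, (P' n).map (Xs n) = symLaw ((P n).map (X n)))
    (a b : ℕ → ℝ) (hapos : ∀ n, 0 < a n) (hbpos : ∀ n, 0 < b n)
    (ha : Tendsto a atTop (𝓝 0)) (hb : Tendsto b atTop (𝓝 0))
    {Ω₀ : Type*} [MeasurableSpace Ω₀] (P₀ : Measure Ω₀) (hP₀ : IsProbabilityMeasure P₀)
    (CZ : Ω₀ → C(unitInterval, ℝ) × C(unitInterval, ℝ))
    (hconv : TendstoInDist P'
      (fun n ω => (a n • contourProcess (Xs n ω), b n • labelProcess (Xs n ω))) P₀ CZ) :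
    ∀ β : ℝ, 0 < β → ∃ α : ℝ, 0 < α ∧
      Filter.limsup (fun n => P n
        {ω | ∃ i j : ℕ, i ≤ 2 * (X n ω).verts.card - 2 ∧ j ≤ 2 * (X n ω).verts.card - 2 ∧
            i ≤ j + ⌊α * ((X n ω).verts.card : ℝ)⌋₊ ∧ j ≤ i + ⌊α * ((X n ω).verts.card : ℝ)⌋₊ ∧
            β < a n * (treeDist (theta (X n ω).verts i) (theta (X n ω).verts j) : ℝ)}) atTop
        < ENNReal.ofReal β := by
  intro β hβ
  classical
  -- the test functions, indexed by k (where δ = 1/(k+1))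
  have hδpos : ∀ k : ℕ, (0:ℝ) < 1/((k:ℝ)+1) := fun k => by positivity
  let modF : ℕ → C(unitInterval,ℝ) × C(unitInterval,ℝ) → ℝ :=
    fun k x => phiCut β (Mod (1/((k:ℝ)+1)) x.1)
  have hcontF : ∀ k, Continuous (modF k) := fun k =>
    (phiCut_continuous β).comp ((Mod_continuous _ (hδpos k).le).comp continuous_fst)
  have hbddF : ∀ k x, ‖modF k x‖ ≤ 1 := fun k x => by
    rw [Real.norm_eq_abs, abs_of_nonneg (phiCut_nonneg _ _)]
    exact phiCut_le_one _ _
  let fB : ℕ → BoundedContinuousFunction (C(unitInterval,ℝ) × C(unitInterval,ℝ)) ℝ :=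
    fun k => BoundedContinuousFunction.ofNormedAddCommGroup (modF k) (hcontF k) 1 (hbddF k)
  have hfB : ∀ k x, (fB k) x = modF k x := fun k x => rfl
  -- apply the convergence hypothesis
  have hlim : ∀ k, Tendsto (fun n => ∫ ω, (fB k) (a n • contourProcess (Xs n ω),
      b n • labelProcess (Xs n ω)) ∂(P' n)) atTop (𝓝 (∫ ω, (fB k) (CZ ω) ∂P₀)) :=
    fun k => hconv (fB k)
  -- choose k such that the limiting integral is below β
  obtain ⟨k, hk⟩ : ∃ k, ∫ ω, (fB k) (CZ ω) ∂P₀ < β := by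
    by_cases hmeas : ∀ k : ℕ, AEStronglyMeasurable (fun ω => (fB k) (CZ ω)) P₀
    · have h0 : Tendsto (fun k => ∫ ω, (fB k) (CZ ω) ∂P₀) atTop (𝓝 (∫ _ω, (0:ℝ) ∂P₀)) := by
        apply tendsto_integral_of_dominated_convergence (bound := fun _ => (1:ℝ)) hmeas
          (integrable_const 1)
        · intro k
          exact Filter.Eventually.of_forall (fun ω => hbddF k _)
        · apply Filter.Eventually.of_forall
          intro ω
          obtain ⟨δ₀, hδ₀, hδ₀'⟩ := Metric.uniformContinuous_iff.mp
            (CompactSpace.uniformContinuous_of_continuous (CZ ω).1.continuous) (β/4)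
            (by positivity)
          obtain ⟨K, hK⟩ := exists_nat_gt (1/δ₀)
          apply Tendsto.congr' _ (tendsto_const_nhds : Tendsto (fun _ : ℕ => (0:ℝ)) atTop (𝓝 0))
          filter_upwards [Filter.eventually_ge_atTop K] with j hj
          have hjK : (1:ℝ)/δ₀ < (j:ℝ)+1 := by
            have : (K:ℝ) ≤ (j:ℝ) := by exact_mod_cast hj
            linarith
          have hlt : 1/((j:ℝ)+1) < δ₀ := by
            rw [div_lt_iff₀ (by positivity : (0:ℝ) < (j:ℝ)+1)]
            rw [div_lt_iff₀ hδ₀] at hjK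
            linarith [hjK]
          have hModle : Mod (1/((j:ℝ)+1)) (CZ ω).1 ≤ β/4 := by
            apply Mod_le (by positivity)
            intro s t hst
            have hd : dist s t < δ₀ := by
              rw [Subtype.dist_eq, Real.dist_eq]
              exact lt_of_le_of_lt hst hlt
            exact (le_of_lt (hδ₀' hd))
          rw [hfB]
          exact (phiCut_eq_zero hβ hModle).symm
      rw [integral_zero] at h0
      exact (h0.eventually_lt_const hβ).exists
    · push_neg at hmeas
      obtain ⟨k, hk⟩ := hmeas
      refine ⟨k, ?_⟩
      rw [integral_undef (fun hint => hk hint.1)]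
      exact hβ
  -- the chosen window width
  refine ⟨1/((k:ℝ)+1), hδpos k, ?_⟩
  set α : ℝ := 1/((k:ℝ)+1) with hα
  have hαpos : 0 < α := hδpos k
  -- the event, as a set of vertex sets
  set Wn : ℕ → Set (Finset Vertex) := fun n =>
    {t : Finset Vertex | ∃ i j : ℕ, i ≤ 2 * t.card - 2 ∧ j ≤ 2 * t.card - 2 ∧
      i ≤ j + ⌊α * (t.card : ℝ)⌋₊ ∧ j ≤ i + ⌊α * (t.card : ℝ)⌋₊ ∧
      β < a n * (treeDist (theta t i) (theta t j) : ℝ)} with hWn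
  -- the key per-n bound
  have hkey : ∀ n, P n
      {ω | ∃ i j : ℕ, i ≤ 2 * (X n ω).verts.card - 2 ∧ j ≤ 2 * (X n ω).verts.card - 2 ∧
          i ≤ j + ⌊α * ((X n ω).verts.card : ℝ)⌋₊ ∧ j ≤ i + ⌊α * ((X n ω).verts.card : ℝ)⌋₊ ∧
          β < a n * (treeDist (theta (X n ω).verts i) (theta (X n ω).verts j) : ℝ)}
      ≤ ENNReal.ofReal (∫ ω, (fB k) (a n • contourProcess (Xs n ω),
          b n • labelProcess (Xs n ω)) ∂(P' n)) := by
    intro n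
    haveI := hP n
    haveI := hP' n
    have hEX : {ω | ∃ i j : ℕ, i ≤ 2 * (X n ω).verts.card - 2 ∧
        j ≤ 2 * (X n ω).verts.card - 2 ∧
        i ≤ j + ⌊α * ((X n ω).verts.card : ℝ)⌋₊ ∧ j ≤ i + ⌊α * ((X n ω).verts.card : ℝ)⌋₊ ∧
        β < a n * (treeDist (theta (X n ω).verts i) (theta (X n ω).verts j) : ℝ)}
        = (X n) ⁻¹' {T : MTree S | T.verts ∈ Wn n} := rfl
    have h1 : P n ((X n) ⁻¹' {T : MTree S | T.verts ∈ Wn n})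
        = ((P n).map (X n)) {T : MTree S | T.verts ∈ Wn n} :=
      (Measure.map_apply (hX n) (measurableSet_verts _)).symm
    have h2 : ((P n).map (X n)) {T : MTree S | T.verts ∈ Wn n}
        = ((P' n).map (Xs n)) {T : MTree S | T.verts ∈ Wn n} := by
      rw [hsym n, symLaw_verts _ (hvalid n).2.1]
    have h3 : ((P' n).map (Xs n)) {T : MTree S | T.verts ∈ Wn n}
        = P' n ((Xs n) ⁻¹' {T : MTree S | T.verts ∈ Wn n}) :=
      Measure.map_apply (hXs n) (measurableSet_verts _)
    set g : Ω' n → ℝ := fun ω => (fB k) (a n • contourProcess (Xs n ω),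
      b n • labelProcess (Xs n ω)) with hg
    have hgeq : g = fun ω => phiCut β (Mod α (a n • contourProcess (Xs n ω))) := rfl
    have hgmeas : Measurable g := by
      rw [hgeq]
      have hcmeas : Measurable (fun ω => contourProcess (Xs n ω)) := by
        have hfac : (fun ω => contourProcess (Xs n ω))
            = (fun t : Finset Vertex => cpV t) ∘ (fun ω => (Xs n ω).verts) :=
          funext fun ω => contourProcess_eq_cpV _
        rw [hfac]
        exact (measurable_from_top (f := fun t : Finset Vertex => cpV t)).comp
          (measurable_verts.comp (hXs n))
      have hsmeas : Measurable (fun ω => a n • contourProcess (Xs n ω)) :=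
        ((continuous_const_smul (a n) :
          Continuous fun y : C(unitInterval, ℝ) => a n • y).measurable).comp hcmeas
      exact (((phiCut_continuous β).comp (Mod_continuous α hαpos.le)).measurable).comp hsmeas
    have hsub : (Xs n) ⁻¹' {T : MTree S | T.verts ∈ Wn n} ⊆ {ω | g ω = 1} := by
      intro ω hω
      have hev : ∃ i j : ℕ, i ≤ 2 * (Xs n ω).verts.card - 2 ∧
          j ≤ 2 * (Xs n ω).verts.card - 2 ∧
          i ≤ j + ⌊α * ((Xs n ω).verts.card : ℝ)⌋₊ ∧
          j ≤ i + ⌊α * ((Xs n ω).verts.card : ℝ)⌋₊ ∧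
          β < a n * (treeDist (theta (Xs n ω).verts i) (theta (Xs n ω).verts j) : ℝ) := hω
      have hmod := event_mod hαpos (hapos n) hβ hev
      show g ω = 1
      have : g ω = phiCut β (Mod α (a n • cpV (Xs n ω).verts)) := rfl
      rw [this]
      exact phiCut_eq_one hβ hmod
    have hint : Integrable g (P' n) :=
      ⟨hgmeas.aestronglyMeasurable,
        HasFiniteIntegral.of_bounded (C := 1) (Filter.Eventually.of_forall fun ω => hbddF k _)⟩
    have hmeas1 : MeasurableSet {ω | g ω = 1} := hgmeas (measurableSet_singleton 1)
    have hind : ((P' n) {ω | g ω = 1}).toReal ≤ ∫ ω, g ω ∂(P' n) := by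
      have hic := integral_indicator_const (1:ℝ) hmeas1 (μ := P' n)
      rw [smul_eq_mul, mul_one, measureReal_def] at hic
      rw [← hic]
      apply integral_mono ((integrable_const (1:ℝ)).indicator hmeas1) hint
      intro ω
      by_cases hω : ω ∈ {ω | g ω = 1}
      · rw [Set.indicator_of_mem hω]
        exact le_of_eq (hω.symm)
      · rw [Set.indicator_of_notMem hω]
        exact phiCut_nonneg _ _
    calc P n {ω | ∃ i j : ℕ, i ≤ 2 * (X n ω).verts.card - 2 ∧
          j ≤ 2 * (X n ω).verts.card - 2 ∧
          i ≤ j + ⌊α * ((X n ω).verts.card : ℝ)⌋₊ ∧ j ≤ i + ⌊α * ((X n ω).verts.card : ℝ)⌋₊ ∧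
          β < a n * (treeDist (theta (X n ω).verts i) (theta (X n ω).verts j) : ℝ)}
        = P' n ((Xs n) ⁻¹' {T : MTree S | T.verts ∈ Wn n}) := by rw [hEX, h1, h2, h3]
      _ ≤ P' n {ω | g ω = 1} := measure_mono hsub
      _ = ENNReal.ofReal (((P' n) {ω | g ω = 1}).toReal) :=
          (ENNReal.ofReal_toReal (measure_ne_top _ _)).symm
      _ ≤ ENNReal.ofReal (∫ ω, g ω ∂(P' n)) := ENNReal.ofReal_le_ofReal hind
  -- pass to the limsup
  have htend : Tendsto (fun n => ENNReal.ofReal (∫ ω, (fB k) (a n • contourProcess (Xs n ω),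
      b n • labelProcess (Xs n ω)) ∂(P' n))) atTop
      (𝓝 (ENNReal.ofReal (∫ ω, (fB k) (CZ ω) ∂P₀))) :=
    (ENNReal.continuous_ofReal.tendsto _).comp (hlim k)
  calc Filter.limsup (fun n => P n
        {ω | ∃ i j : ℕ, i ≤ 2 * (X n ω).verts.card - 2 ∧ j ≤ 2 * (X n ω).verts.card - 2 ∧
            i ≤ j + ⌊α * ((X n ω).verts.card : ℝ)⌋₊ ∧ j ≤ i + ⌊α * ((X n ω).verts.card : ℝ)⌋₊ ∧
            β < a n * (treeDist (theta (X n ω).verts i) (theta (X n ω).verts j) : ℝ)}) atTop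
      ≤ Filter.limsup (fun n => ENNReal.ofReal (∫ ω, (fB k) (a n • contourProcess (Xs n ω),
          b n • labelProcess (Xs n ω)) ∂(P' n))) atTop :=
        Filter.limsup_le_limsup (Filter.Eventually.of_forall hkey)
    _ = ENNReal.ofReal (∫ ω, (fB k) (CZ ω) ∂P₀) := htend.limsup_eq
    _ < ENNReal.ofReal β := (ENNReal.ofReal_lt_ofReal_iff hβ).mpr hk

end TreeSym
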